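/- Fix k ≥ 2, positive integers n_1, …, n_k, reals π_1, …, π_{k−1} ≥ 0, C > 0, and a real constant c. On a probability space, let {A_{i,j} : 1 ≤ i ≤ k−1, 1 ≤ j ≤ n_i} ∪ {B_j : 1 ≤ j ≤ n_k} be jointly independent real random variables, each taking values in [0, C] almost surely, and define Y = Σ_{i=1}^{k−1} (2π_i / n_i) Σ_{j=1}^{n_i} A_{i,j} + (1/n_k) Σ_{j=1}^{n_k} B_j − c. Then for every δ ∈ (0,1), with probability at least 1 − δ, E[Y] ≤ max(Y, 0) + C √( (1/2) ( 4 Σ_{i=1}^{k−1} π_i²/n_i + 1/n_k ) · log(1/δ) ). -/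

import Mathlib

open MeasureTheory ProbabilityTheory


lemma hoeff_aux {p : ℝ} (hp0 : 0 ≤ p) (hp1 : p ≤ 1) (x : ℝ) :
    Real.log (1 - p + p * Real.exp x) ≤ p * x + x ^ 2 / 8 := by
  have hD : ∀ y : ℝ, 0 < 1 - p + p * Real.exp y := by
    intro y
    rcases eq_or_lt_of_le hp0 with h | h
    · simp [← h]
    · nlinarith [Real.exp_pos y, mul_pos h (Real.exp_pos y)]
  set g : ℝ → ℝ := fun y => p * y + y ^ 2 / 8 - Real.log (1 - p + p * Real.exp y) with hgdef
  set g1 : ℝ → ℝ := fun y => p + y / 4 - p * Real.exp y / (1 - p + p * Real.exp y) with hg1def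
  have hDder : ∀ y : ℝ, HasDerivAt (fun z => 1 - p + p * Real.exp z) (p * Real.exp y) y := by
    intro y
    exact ((Real.hasDerivAt_exp y).const_mul p).const_add (1 - p)
  have hg : ∀ y : ℝ, HasDerivAt g (g1 y) y := by
    intro y
    have h1 : HasDerivAt (fun z : ℝ => p * z + z ^ 2 / 8) (p + y * 2 / 8) y := by
      have := ((hasDerivAt_id y).const_mul p).add ((hasDerivAt_pow 2 y).div_const 8)
      exact this.congr_deriv (by ring)
    have h2 : HasDerivAt (fun z => Real.log (1 - p + p * Real.exp z))
        (p * Real.exp y / (1 - p + p * Real.exp y)) y := (hDder y).log (hD y).ne'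
    have := h1.sub h2
    exact this.congr_deriv (by simp only [hg1def]; ring)
  have hg1 : ∀ y : ℝ, HasDerivAt g1
      (1 / 4 - ((1 - p) * (p * Real.exp y)) / (1 - p + p * Real.exp y) ^ 2) y := by
    intro y
    have h1 : HasDerivAt (fun z : ℝ => p + z / 4) (1 / 4) y := by
      have := (hasDerivAt_id y).div_const 4
      exact this.const_add p
    have h2 : HasDerivAt (fun z => p * Real.exp z / (1 - p + p * Real.exp z))
        ((p * Real.exp y * (1 - p + p * Real.exp y) - p * Real.exp y * (p * Real.exp y)) /
          (1 - p + p * Real.exp y) ^ 2) y :=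
      ((Real.hasDerivAt_exp y).const_mul p).div (hDder y) (hD y).ne'
    have := h1.sub h2
    refine this.congr_deriv ?_
    have h3 : p * Real.exp y * (1 - p + p * Real.exp y) - p * Real.exp y * (p * Real.exp y)
        = (1 - p) * (p * Real.exp y) := by ring
    rw [h3]
  have hg1mono : Monotone g1 := by
    apply monotone_of_deriv_nonneg (fun y => (hg1 y).differentiableAt)
    intro y
    rw [(hg1 y).deriv]
    have hu : (0:ℝ) ≤ 1 - p := by linarith
    have hv : (0:ℝ) ≤ p * Real.exp y := mul_nonneg hp0 (Real.exp_pos y).le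
    have hd := hD y
    rw [sub_nonneg, div_le_iff₀ (by positivity)]
    nlinarith [sq_nonneg ((1 - p) - p * Real.exp y)]
  have hg10 : g1 0 = 0 := by
    simp only [hg1def, Real.exp_zero, mul_one]
    field_simp
    ring
  have hg0 : g 0 = 0 := by
    simp [hgdef]
  have key : 0 ≤ g x := by
    rcases le_total 0 x with hx | hx
    · have hmono : MonotoneOn g (Set.Ici (0:ℝ)) := by
        apply monotoneOn_of_deriv_nonneg (convex_Ici 0)
          (fun y _ => ((hg y).differentiableAt).continuousAt.continuousWithinAt)
          (fun y _ => (hg y).differentiableAt.differentiableWithinAt)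
        intro y hy
        rw [(hg y).deriv]
        rw [interior_Ici] at hy
        have := hg1mono (le_of_lt hy)
        rw [hg10] at this
        exact this
      have := hmono (Set.self_mem_Ici) (Set.mem_Ici.2 hx) hx
      rw [hg0] at this; exact this
    · have hanti : AntitoneOn g (Set.Iic (0:ℝ)) := by
        apply antitoneOn_of_deriv_nonpos (convex_Iic 0)
          (fun y _ => ((hg y).differentiableAt).continuousAt.continuousWithinAt)
          (fun y _ => (hg y).differentiableAt.differentiableWithinAt)
        intro y hy
        rw [(hg y).deriv]
        rw [interior_Iic] at hy
        have := hg1mono (le_of_lt hy)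
        rw [hg10] at this
        exact this
      have := hanti (Set.mem_Iic.2 hx) (Set.self_mem_Iic) hx
      rw [hg0] at this; exact this
  have : Real.log (1 - p + p * Real.exp x) ≤ p * x + x ^ 2 / 8 := by
    have := key
    simp only [hgdef] at this
    linarith
  exact this

lemma hoeff_mgf {Ω : Type*} [MeasurableSpace Ω] (μ : Measure Ω) [IsProbabilityMeasure μ]
    (X : Ω → ℝ) (hm : Measurable X) (a b : ℝ)
    (hr : ∀ᵐ ω ∂μ, X ω ∈ Set.Icc a b) (h0 : ∫ ω, X ω ∂μ = 0) (t : ℝ) :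
    mgf X μ t ≤ Real.exp (t ^ 2 * (b - a) ^ 2 / 8) := by
  have hXint : Integrable X μ := by
    refine Integrable.mono' (integrable_const (max |a| |b|)) hm.aestronglyMeasurable ?_
    filter_upwards [hr] with ω hω
    rw [Real.norm_eq_abs, abs_le]
    constructor
    · exact le_trans (neg_le_neg (le_max_left |a| |b|)) (neg_abs_le a |>.trans hω.1)
    · exact hω.2.trans ((le_abs_self b).trans (le_max_right _ _))
  have ha0 : a ≤ 0 := by
    have h1 : ∫ _ω, a ∂μ ≤ ∫ ω, X ω ∂μ := integral_mono_ae (integrable_const a) hXint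
        (by filter_upwards [hr] with ω hω using hω.1)
    rw [h0, integral_const] at h1
    simpa using h1
  have hb0 : 0 ≤ b := by
    have h1 : ∫ ω, X ω ∂μ ≤ ∫ _ω, b ∂μ := integral_mono_ae hXint (integrable_const b)
        (by filter_upwards [hr] with ω hω using hω.2)
    rw [h0, integral_const] at h1
    simpa using h1
  rcases eq_or_lt_of_le (ha0.trans hb0) with hab | hab
  · -- a = b = 0, X = 0 a.e.
    have ha : a = 0 := le_antisymm ha0 (hab ▸ hb0)
    have hb : b = 0 := hab ▸ ha
    have hX0 : ∀ᵐ ω ∂μ, Real.exp (t * X ω) = Real.exp (t * 0) := by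
      filter_upwards [hr] with ω hω
      rw [ha, hb] at hω
      rw [le_antisymm hω.2 hω.1]
    have hmgf : mgf X μ t = 1 := by
      rw [mgf, integral_congr_ae hX0]
      simp
    rw [hmgf, ha, hb]
    simp
  · -- main case a < b
    have hba : (0:ℝ) < b - a := by linarith
    set p : ℝ := -a / (b - a) with hp
    set h : ℝ := t * (b - a) with hh
    have hp0 : 0 ≤ p := div_nonneg (by linarith) hba.le
    have hp1 : p ≤ 1 := by
      rw [div_le_one hba]; linarith
    have hexpint : Integrable (fun ω => Real.exp (t * X ω)) μ := by
      refine Integrable.mono' (integrable_const (Real.exp (|t| * max |a| |b|)))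
        ((hm.const_mul t).exp).aestronglyMeasurable ?_
      filter_upwards [hr] with ω hω
      rw [Real.norm_eq_abs, abs_of_nonneg (Real.exp_pos _).le, Real.exp_le_exp]
      calc t * X ω ≤ |t * X ω| := le_abs_self _
      _ = |t| * |X ω| := abs_mul t (X ω)
      _ ≤ |t| * max |a| |b| := by
          apply mul_le_mul_of_nonneg_left _ (abs_nonneg t)
          rw [abs_le]
          refine ⟨?_, ?_⟩
          · exact le_trans (neg_le_neg (le_max_left |a| |b|)) (neg_abs_le a |>.trans hω.1)
          · exact hω.2.trans ((le_abs_self b).trans (le_max_right _ _))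
    -- pointwise convexity bound
    have hpt : ∀ᵐ ω ∂μ, Real.exp (t * X ω) ≤
        (b * Real.exp (t * a) - a * Real.exp (t * b)) / (b - a)
          + ((Real.exp (t * b) - Real.exp (t * a)) / (b - a)) * X ω := by
      filter_upwards [hr] with ω hω
      obtain ⟨hxa, hxb⟩ := hω
      set x := X ω
      have hθ0 : 0 ≤ (b - x) / (b - a) := div_nonneg (by linarith) hba.le
      have hθ1 : 0 ≤ (x - a) / (b - a) := div_nonneg (by linarith) hba.le
      have hsum : (b - x) / (b - a) + (x - a) / (b - a) = 1 := by
        rw [← add_div, div_eq_one_iff_eq hba.ne']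
        ring
      have hcvx := convexOn_exp.2 (Set.mem_univ (t * a)) (Set.mem_univ (t * b)) hθ0 hθ1 hsum
      have harg : ((b - x) / (b - a)) • (t * a) + ((x - a) / (b - a)) • (t * b) = t * x := by
        simp only [smul_eq_mul]
        field_simp
        ring
      rw [harg] at hcvx
      calc Real.exp (t * x) ≤ (b - x) / (b - a) * Real.exp (t * a)
            + (x - a) / (b - a) * Real.exp (t * b) := hcvx
      _ = (b * Real.exp (t * a) - a * Real.exp (t * b)) / (b - a)
          + ((Real.exp (t * b) - Real.exp (t * a)) / (b - a)) * x := by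
        field_simp
        ring
    have hK : mgf X μ t ≤ (b * Real.exp (t * a) - a * Real.exp (t * b)) / (b - a) := by
      have hint2 : Integrable (fun ω => (b * Real.exp (t * a) - a * Real.exp (t * b)) / (b - a)
          + ((Real.exp (t * b) - Real.exp (t * a)) / (b - a)) * X ω) μ :=
        (integrable_const _).add (hXint.const_mul _)
      calc mgf X μ t ≤ ∫ ω, ((b * Real.exp (t * a) - a * Real.exp (t * b)) / (b - a)
            + ((Real.exp (t * b) - Real.exp (t * a)) / (b - a)) * X ω) ∂μ :=
          integral_mono_ae hexpint hint2 hpt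
      _ = (b * Real.exp (t * a) - a * Real.exp (t * b)) / (b - a) := by
          rw [integral_add (integrable_const _) (hXint.const_mul _), integral_const,
            integral_const_mul, h0]
          simp
    have hid : (b * Real.exp (t * a) - a * Real.exp (t * b)) / (b - a)
        = Real.exp (-(p * h)) * (1 - p + p * Real.exp h) := by
      have hph : -(p * h) = t * a := by
        rw [hp, hh]; field_simp
      have hexp : Real.exp (t * b) = Real.exp (t * a) * Real.exp h := by
        rw [← Real.exp_add]; congr 1; rw [hh]; ring
      rw [hph, hexp, hp]
      field_simp
      ring
    have hfin : (b * Real.exp (t * a) - a * Real.exp (t * b)) / (b - a)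
        ≤ Real.exp (t ^ 2 * (b - a) ^ 2 / 8) := by
      rw [hid]
      have hDpos : 0 < 1 - p + p * Real.exp h := by
        rcases eq_or_lt_of_le hp0 with h' | h'
        · simp [← h']
        · nlinarith [Real.exp_pos h, mul_pos h' (Real.exp_pos h)]
      have := hoeff_aux hp0 hp1 h
      have hD : 1 - p + p * Real.exp h ≤ Real.exp (p * h + h ^ 2 / 8) := by
        rw [← Real.exp_log hDpos]
        exact Real.exp_le_exp.2 this
      calc Real.exp (-(p * h)) * (1 - p + p * Real.exp h)
          ≤ Real.exp (-(p * h)) * Real.exp (p * h + h ^ 2 / 8) :=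
            mul_le_mul_of_nonneg_left hD (Real.exp_pos _).le
      _ = Real.exp (h ^ 2 / 8) := by rw [← Real.exp_add]; ring_nf
      _ = Real.exp (t ^ 2 * (b - a) ^ 2 / 8) := by rw [hh]; ring_nf
    exact hK.trans hfin

lemma hoeff_tail {Ω : Type*} [MeasurableSpace Ω] (μ : Measure Ω) [IsProbabilityMeasure μ]
    {ι : Type*} [Fintype ι] (X : ι → Ω → ℝ)
    (hmeas : ∀ i, Measurable (X i)) (hindep : iIndepFun X μ)
    (a b : ι → ℝ) (hr : ∀ i, ∀ᵐ ω ∂μ, X i ω ∈ Set.Icc (a i) (b i))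
    (h0 : ∀ i, ∫ ω, X i ω ∂μ = 0)
    {ε S : ℝ} (hε : 0 < ε) (hS : S = ∑ i, (b i - a i) ^ 2) (hSpos : 0 < S) :
    (μ {ω | ε ≤ ∑ i, X i ω}).toReal ≤ Real.exp (-(2 * ε ^ 2 / S)) := by
  set t : ℝ := 4 * ε / S with ht
  have htpos : 0 < t := by positivity
  have hint : ∀ i, Integrable (fun ω => Real.exp (t * X i ω)) μ := by
    intro i
    refine Integrable.mono' (integrable_const (Real.exp (|t| * max |a i| |b i|)))
      (((hmeas i).const_mul t).exp).aestronglyMeasurable ?_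
    filter_upwards [hr i] with ω hω
    rw [Real.norm_eq_abs, abs_of_nonneg (Real.exp_pos _).le, Real.exp_le_exp]
    calc t * X i ω ≤ |t * X i ω| := le_abs_self _
    _ = |t| * |X i ω| := abs_mul _ _
    _ ≤ |t| * max |a i| |b i| := by
        apply mul_le_mul_of_nonneg_left _ (abs_nonneg t)
        rw [abs_le]
        exact ⟨le_trans (neg_le_neg (le_max_left _ _)) ((neg_abs_le _).trans hω.1),
          hω.2.trans ((le_abs_self _).trans (le_max_right _ _))⟩
  have hsum_int : Integrable (fun ω => Real.exp (t * (∑ i, X i) ω)) μ :=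
    hindep.integrable_exp_mul_sum hmeas (fun i _ => hint i)
  have hset : {ω | ε ≤ ∑ i, X i ω} = {ω | ε ≤ (∑ i, X i) ω} := by
    ext ω; simp [Finset.sum_apply]
  have hchern := measure_ge_le_exp_mul_mgf (μ := μ) (X := ∑ i, X i) ε htpos.le hsum_int
  have hmgf : mgf (∑ i, X i) μ t ≤ Real.exp (t ^ 2 * S / 8) := by
    rw [hindep.mgf_sum hmeas Finset.univ]
    calc ∏ i, mgf (X i) μ t ≤ ∏ i, Real.exp (t ^ 2 * (b i - a i) ^ 2 / 8) :=
        Finset.prod_le_prod (fun i _ => mgf_nonneg)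
          (fun i _ => hoeff_mgf μ (X i) (hmeas i) (a i) (b i) (hr i) (h0 i) t)
    _ = Real.exp (∑ i, t ^ 2 * (b i - a i) ^ 2 / 8) := by rw [Real.exp_sum]
    _ = Real.exp (t ^ 2 * S / 8) := by
        congr 1
        rw [hS, Finset.mul_sum, Finset.sum_div]
  calc (μ {ω | ε ≤ ∑ i, X i ω}).toReal = (μ {ω | ε ≤ (∑ i, X i) ω}).toReal := by rw [hset]
  _ ≤ Real.exp (-t * ε) * mgf (∑ i, X i) μ t := hchern
  _ ≤ Real.exp (-t * ε) * Real.exp (t ^ 2 * S / 8) :=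
      mul_le_mul_of_nonneg_left hmgf (Real.exp_pos _).le
  _ = Real.exp (-t * ε + t ^ 2 * S / 8) := (Real.exp_add _ _).symm
  _ = Real.exp (-(2 * ε ^ 2 / S)) := by
      congr 1
      rw [ht]
      field_simp
      ring

/-- High-probability bound for the population risk in terms of the ReLU-corrected
CSMPU empirical risk.  With `Y = Σ_i (2π_i/n_i) Σ_j A_{i,j} + (1/n_k) Σ_j B_j − c`
built from jointly independent `[0, C]`-valued per-sample losses, for every
`δ ∈ (0,1)`, with probability at least `1 − δ`,
`E[Y] ≤ max(Y, 0) + C √((1/2)(4 Σ_i π_i²/n_i + 1/n_k) log(1/δ))`. -/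
theorem csmpu_corrected_risk_bound
    {Ω : Type*} [MeasurableSpace Ω] (μ : Measure Ω) [IsProbabilityMeasure μ]
    (k : ℕ) (hk : 2 ≤ k)
    (n : Fin (k - 1) → ℕ) (hn : ∀ i, 0 < n i) (nk : ℕ) (hnk : 0 < nk)
    (π : Fin (k - 1) → ℝ) (hπ : ∀ i, 0 ≤ π i)
    (C : ℝ) (hC : 0 < C) (c : ℝ)
    (W : ((Σ i : Fin (k - 1), Fin (n i)) ⊕ Fin nk) → Ω → ℝ)
    (hWmeas : ∀ idx, Measurable (W idx))
    (hWindep : iIndepFun W μ)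
    (hWrange : ∀ idx, ∀ᵐ ω ∂μ, W idx ω ∈ Set.Icc 0 C)
    (Y : Ω → ℝ)
    (hY : Y = fun ω =>
      (∑ i : Fin (k - 1), (2 * π i / (n i : ℝ)) * ∑ j : Fin (n i), W (Sum.inl ⟨i, j⟩) ω)
        + (1 / (nk : ℝ)) * ∑ j : Fin nk, W (Sum.inr j) ω - c) :
    ∀ δ : ℝ, δ ∈ Set.Ioo (0 : ℝ) 1 →
      ENNReal.ofReal (1 - δ) ≤
        μ {ω | (∫ ω', Y ω' ∂μ) ≤ max (Y ω) 0 +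
            C * Real.sqrt ((1 / 2) *
              (4 * (∑ i : Fin (k - 1), π i ^ 2 / (n i : ℝ)) + 1 / (nk : ℝ)) *
              Real.log (1 / δ))} := by
  classical
  intro δ hδ
  obtain ⟨hδ0, hδ1⟩ := hδ
  set coeff : ((Σ i : Fin (k - 1), Fin (n i)) ⊕ Fin nk) → ℝ :=
    Sum.elim (fun s => 2 * π s.1 / (n s.1 : ℝ)) (fun _ => 1 / (nk : ℝ)) with hcoeff
  have hcoeff_nonneg : ∀ idx, 0 ≤ coeff idx := by
    rintro (⟨i, j⟩ | j) <;> simp only [hcoeff, Sum.elim_inl, Sum.elim_inr]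
    · exact div_nonneg (by linarith [hπ i]) (Nat.cast_nonneg _)
    · positivity
  set m : ((Σ i : Fin (k - 1), Fin (n i)) ⊕ Fin nk) → ℝ :=
    fun idx => ∫ ω, W idx ω ∂μ with hm
  have hWint : ∀ idx, Integrable (W idx) μ := by
    intro idx
    refine Integrable.mono' (integrable_const C) (hWmeas idx).aestronglyMeasurable ?_
    filter_upwards [hWrange idx] with ω hω
    rw [Real.norm_eq_abs, abs_of_nonneg hω.1]
    exact hω.2
  set X : ((Σ i : Fin (k - 1), Fin (n i)) ⊕ Fin nk) → Ω → ℝ :=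
    fun idx ω => coeff idx * (m idx - W idx ω) with hX
  have hXmeas : ∀ idx, Measurable (X idx) :=
    fun idx => (measurable_const.sub (hWmeas idx)).const_mul _
  have hXindep : iIndepFun X μ :=
    hWindep.comp (fun idx (x : ℝ) => coeff idx * (m idx - x))
      (fun idx => (measurable_const.sub measurable_id).const_mul _)
  have hXrange : ∀ idx, ∀ᵐ ω ∂μ, X idx ω ∈
      Set.Icc (coeff idx * (m idx - C)) (coeff idx * m idx) := by
    intro idx
    filter_upwards [hWrange idx] with ω hω
    constructor
    · apply mul_le_mul_of_nonneg_left _ (hcoeff_nonneg idx)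
      linarith [hω.2]
    · apply mul_le_mul_of_nonneg_left _ (hcoeff_nonneg idx)
      linarith [hω.1]
  have hX0 : ∀ idx, ∫ ω, X idx ω ∂μ = 0 := by
    intro idx
    simp only [hX]
    rw [integral_const_mul, integral_sub (integrable_const _) (hWint idx), integral_const]
    simp [hm]
  set V : ℝ := 4 * (∑ i : Fin (k - 1), π i ^ 2 / (n i : ℝ)) + 1 / (nk : ℝ) with hV
  have hVpos : 0 < V := by
    have h1 : 0 ≤ ∑ i : Fin (k - 1), π i ^ 2 / (n i : ℝ) :=
      Finset.sum_nonneg fun i _ => div_nonneg (sq_nonneg _) (Nat.cast_nonneg _)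
    have h2 : (0:ℝ) < 1 / (nk : ℝ) := by
      have : (0:ℝ) < nk := by exact_mod_cast hnk
      positivity
    rw [hV]
    linarith
  have hsum_sq : ∑ idx, coeff idx ^ 2 = V := by
    rw [Fintype.sum_sum_type]
    have h1 : ∑ s : Σ i : Fin (k - 1), Fin (n i), coeff (Sum.inl s) ^ 2
        = ∑ i : Fin (k - 1), 4 * (π i ^ 2 / (n i : ℝ)) := by
      rw [← Finset.univ_sigma_univ, Finset.sum_sigma]
      refine Finset.sum_congr rfl fun i _ => ?_
      simp only [hcoeff, Sum.elim_inl]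
      rw [Finset.sum_const, Finset.card_univ, Fintype.card_fin, nsmul_eq_mul]
      have hni : (0:ℝ) < (n i : ℝ) := by exact_mod_cast hn i
      field_simp
      ring
    have h2 : ∑ j : Fin nk, coeff (Sum.inr j) ^ 2 = 1 / (nk : ℝ) := by
      simp only [hcoeff, Sum.elim_inr]
      rw [Finset.sum_const, Finset.card_univ, Fintype.card_fin, nsmul_eq_mul]
      have hnk' : (0:ℝ) < (nk : ℝ) := by exact_mod_cast hnk
      field_simp
    rw [h1, h2, hV, Finset.mul_sum]
  set L : ℝ := Real.log (1 / δ) with hL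
  have hLpos : 0 < L := Real.log_pos (by rw [lt_div_iff₀ hδ0]; linarith)
  set ε : ℝ := C * Real.sqrt ((1 / 2) * V * L) with hε
  have hargnn : (0:ℝ) ≤ (1 / 2) * V * L := by positivity
  have hεpos : 0 < ε := by
    apply mul_pos hC
    apply Real.sqrt_pos.2
    positivity
  set S : ℝ := C ^ 2 * V with hSdef
  have hSpos : 0 < S := by positivity
  have hSsum : S = ∑ idx, (coeff idx * m idx - coeff idx * (m idx - C)) ^ 2 := by
    have : ∀ idx, (coeff idx * m idx - coeff idx * (m idx - C)) ^ 2
        = C ^ 2 * coeff idx ^ 2 := fun idx => by ring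
    rw [Finset.sum_congr rfl fun idx _ => this idx, ← Finset.mul_sum, hsum_sq]
  have htail := hoeff_tail μ X hXmeas hXindep
    (fun idx => coeff idx * (m idx - C)) (fun idx => coeff idx * m idx)
    hXrange hX0 hεpos hSsum hSpos
  have hδeq : Real.exp (-(2 * ε ^ 2 / S)) = δ := by
    have hε2 : ε ^ 2 = C ^ 2 * ((1 / 2) * V * L) := by
      rw [hε, mul_pow, Real.sq_sqrt hargnn]
    have harg : 2 * ε ^ 2 / S = L := by
      rw [hε2, hSdef]
      field_simp
    rw [harg, hL, ← Real.log_inv, Real.exp_log (by positivity)]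
    simp
  -- relate ∑ X to ∫ Y - Y
  have reindex : ∀ g : ((Σ i : Fin (k - 1), Fin (n i)) ⊕ Fin nk) → ℝ,
      (∑ i : Fin (k - 1), (2 * π i / (n i : ℝ)) * ∑ j : Fin (n i), g (Sum.inl ⟨i, j⟩))
        + (1 / (nk : ℝ)) * ∑ j : Fin nk, g (Sum.inr j)
      = ∑ idx, coeff idx * g idx := by
    intro g
    rw [Fintype.sum_sum_type]
    congr 1
    · rw [← Finset.univ_sigma_univ, Finset.sum_sigma]
      exact Finset.sum_congr rfl fun i _ => by rw [Finset.mul_sum]; rfl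
    · rw [Finset.mul_sum]; rfl
  have hYeq : Y = fun ω => (∑ idx, coeff idx * W idx ω) - c := by
    funext ω
    rw [hY]
    simp only
    rw [← reindex (fun idx => W idx ω)]
  have hEY : ∫ ω, Y ω ∂μ = (∑ idx, coeff idx * m idx) - c := by
    rw [hYeq]
    rw [integral_sub (integrable_finset_sum _ fun idx _ => (hWint idx).const_mul _)
      (integrable_const c), integral_const]
    simp only [measure_univ, ENNReal.toReal_one, probReal_univ, smul_eq_mul, one_mul]
    rw [integral_finset_sum _ fun idx _ => (hWint idx).const_mul _]
    congr 1
    exact Finset.sum_congr rfl fun idx _ => integral_const_mul _ _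
  have hZ : ∀ ω, ∑ idx, X idx ω = (∫ ω', Y ω' ∂μ) - Y ω := by
    intro ω
    rw [hEY, hYeq]
    simp only [hX, mul_sub]
    rw [Finset.sum_sub_distrib]
    ring
  -- final measure manipulation
  set s : Set Ω := {ω | ε ≤ ∑ idx, X idx ω} with hs
  have hsmeas : MeasurableSet s := by
    apply measurableSet_le measurable_const
    exact Finset.measurable_sum _ fun idx _ => hXmeas idx
  have hμs : μ s ≤ ENNReal.ofReal δ := by
    rw [← ENNReal.ofReal_toReal (measure_ne_top μ s)]
    exact ENNReal.ofReal_le_ofReal (htail.trans_eq hδeq)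
  have hsub : sᶜ ⊆ {ω | (∫ ω', Y ω' ∂μ) ≤ max (Y ω) 0 + ε} := by
    intro ω hω
    simp only [hs, Set.mem_compl_iff, Set.mem_setOf_eq, not_le] at hω
    rw [hZ ω] at hω
    have := le_max_left (Y ω) 0
    simp only [Set.mem_setOf_eq]
    linarith
  calc ENNReal.ofReal (1 - δ) = 1 - ENNReal.ofReal δ := by
        rw [← ENNReal.ofReal_one, ← ENNReal.ofReal_sub _ hδ0.le]
  _ ≤ 1 - μ s := tsub_le_tsub_left hμs 1
  _ = μ sᶜ := by rw [measure_compl hsmeas (measure_ne_top _ _), measure_univ]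
  _ ≤ _ := measure_mono hsub
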